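/- If G is a partial cube with minimum degree δ, then the cop number of G is at least ⌈δ/2⌉. -/

import Mathlib

open SimpleGraph

/-- The `n`-dimensional hypercube: vertices are binary strings of length `n`,
adjacent iff they differ in exactly one bit (Hamming distance 1). -/
def Qcube (n : ℕ) : SimpleGraph (Fin n → Bool) where
  Adj x y := hammingDist x y = 1
  symm := ⟨fun x y h => by show hammingDist y x = 1; rwa [hammingDist_comm]⟩
  loopless := ⟨fun x h => by simp [hammingDist_self] at h⟩

/-- A strategy for `k` cops on a graph `G`: initial positions, and a move
function; each cop stays put or moves along an edge. -/
structure CopStrategy {V : Type*} (G : SimpleGraph V) (k : ℕ) where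
  init : Fin k → V
  move : (Fin k → V) → V → (Fin k → V)
  valid : ∀ c r i, move c r i = c i ∨ G.Adj (c i) (move c r i)

/-- A strategy for the robber: an initial position (chosen after seeing the
cops' initial positions) and a move function; the robber stays put or moves
along an edge. -/
structure RobberStrategy {V : Type*} (G : SimpleGraph V) (k : ℕ) where
  init : (Fin k → V) → V
  move : (Fin k → V) → V → V
  valid : ∀ c r, move c r = r ∨ G.Adj r (move c r)

/-- The sequence of game states `(cop positions, robber position)`: in each
round the cops move first, then the robber. -/
def gamePlay {V : Type*} {G : SimpleGraph V} {k : ℕ} (S : CopStrategy G k)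
    (R : RobberStrategy G k) : ℕ → (Fin k → V) × V
  | 0 => (S.init, R.init S.init)
  | (t + 1) =>
      let p := gamePlay S R t
      let c' := S.move p.1 p.2
      (c', R.move c' p.2)

/-- `k` cops have a winning strategy on `G`: for every robber strategy, at some
point a cop occupies the robber's vertex (either at a state, or in the middle
of a round just after the cops move). -/
def CopsWin {V : Type*} (G : SimpleGraph V) (k : ℕ) : Prop :=
  ∃ S : CopStrategy G k, ∀ R : RobberStrategy G k, ∃ t, ∃ i : Fin k,
    (gamePlay S R t).1 i = (gamePlay S R t).2 ∨
    S.move (gamePlay S R t).1 (gamePlay S R t).2 i = (gamePlay S R t).2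

/-- The cop number of `G`: the least number of cops that can guarantee
capturing the robber. -/
noncomputable def copNumber {V : Type*} (G : SimpleGraph V) : ℕ :=
  sInf {k | CopsWin G k}


open SimpleGraph

section Aux
variable {n : ℕ}

/-- Characterization of Hamming distance ≤ 1. -/
lemma hd_le_one_char {w y : Fin n → Bool} (h : hammingDist w y ≤ 1) :
    w = y ∨ ∃ j, w j ≠ y j ∧ ∀ i, i ≠ j → w i = y i := by
  classical
  by_cases hwy : w = y
  · exact Or.inl hwy
  · right
    have hcard : (Finset.univ.filter fun i => w i ≠ y i).card ≤ 1 := h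
    have hne : (Finset.univ.filter fun i => w i ≠ y i).Nonempty := by
      rw [Finset.nonempty_iff_ne_empty]
      intro hemp
      apply hwy
      funext i
      by_contra hi
      have : i ∈ (Finset.univ.filter fun i => w i ≠ y i) := by simp [hi]
      simp [hemp] at this
    obtain ⟨j, hj⟩ := hne
    have hj' : w j ≠ y j := (Finset.mem_filter.1 hj).2
    refine ⟨j, hj', fun i hij => ?_⟩
    by_contra hi
    have hmem : i ∈ (Finset.univ.filter fun i => w i ≠ y i) := by simp [hi]
    exact hij (Finset.card_le_one.1 hcard i hmem j hj)

lemma bool_trans {a b c : Bool} (h1 : a ≠ b) (h2 : c ≠ b) : a = c := by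
  cases a <;> cases b <;> cases c <;> simp_all

lemma bool_flip {a b : Bool} (h : a ≠ b) : a = !b := by
  cases a <;> cases b <;> simp_all

/-- The intersection of two closed 1-balls around distinct points in the
hypercube contains at most 2 points. -/
lemma pair_lemma (x y : Fin n → Bool) (hxy : x ≠ y) :
    ∃ P : Finset (Fin n → Bool), P.card ≤ 2 ∧
      ∀ w, hammingDist w y ≤ 1 → hammingDist x w ≤ 1 → w ∈ P := by
  classical
  have hd1 : 0 < hammingDist x y := hammingDist_pos.2 hxy
  rcases hdd : hammingDist x y with _ | _ | _ | d
  · omega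
  · -- distance 1
    refine ⟨{x, y}, (Finset.card_insert_le _ _).trans (by simp), ?_⟩
    obtain ⟨m, hm, hxm⟩ : ∃ m, x m ≠ y m ∧ ∀ i, i ≠ m → x i = y i := by
      rcases hd_le_one_char (w := x) (y := y) (by omega) with h | h
      · exact absurd h hxy
      · exact h
    intro w hwy hxw
    rcases hd_le_one_char hwy with rfl | ⟨j, hj, hwj⟩
    · simp
    rcases hd_le_one_char hxw with h | ⟨j', hj', hxj'⟩
    · simp [← h]
    -- show w = x
    have hjm : j = m := by
      by_contra hjm
      -- then w m = y m, so x m ≠ w m, so j' = m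
      have hwm : w m = y m := hwj m (fun h => hjm h.symm) -- careful direction
      have hxwm : x m ≠ w m := fun h => hm (h.trans hwm)
      have hj'm : j' = m := by
        by_contra hj'm
        exact hxwm (hxj' m (fun h => hj'm h.symm))
      -- for i ≠ m, x i = w i; take i = j
      have hxwj : x j = w j := hxj' j (by rw [hj'm]; exact hjm)
      have hxyj : x j = y j := hxm j hjm
      exact hj (hxwj.symm.trans hxyj)
    have hj2 : w m ≠ y m := hjm ▸ hj
    have hwx : w = x := by
      funext i
      by_cases him : i = m
      · rw [him]; exact bool_trans hj2 hm
      · rw [hwj i (fun h => him (h.trans hjm)), hxm i him]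
    simp [hwx]
  · -- distance 2
    set D : Finset (Fin n) := Finset.univ.filter fun i => x i ≠ y i with hD
    have hDcard : D.card = 2 := hdd
    refine ⟨D.image (fun j => Function.update y j (!(y j))),
      (Finset.card_image_le).trans (le_of_eq hDcard), ?_⟩
    intro w hwy hxw
    rcases hd_le_one_char hwy with rfl | ⟨j, hj, hwj⟩
    · omega
    have hxj : x j ≠ y j := by
      by_contra hxyj
      -- find m ∈ D, m ≠ j
      obtain ⟨m, hmD⟩ : D.Nonempty := by rw [← Finset.card_pos, hDcard]; omega
      have hm : x m ≠ y m := (Finset.mem_filter.1 hmD).2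
      have hmj : m ≠ j := fun h => hm (h ▸ hxyj)
      -- then both j and m witness x ≠ w
      have h1 : x j ≠ w j := fun h => hj (h.symm.trans hxyj)
      have h2 : x m ≠ w m := fun h => hm (h.trans (hwj m hmj))
      have hsub : ({j, m} : Finset (Fin n)) ⊆ Finset.univ.filter fun i => x i ≠ w i := by
        intro i hi
        rcases Finset.mem_insert.1 hi with rfl | hi
        · simp [h1]
        · simp [Finset.mem_singleton.1 hi, h2]
      have : ({j, m} : Finset (Fin n)).card ≤ hammingDist x w :=
        Finset.card_le_card hsub
      rw [Finset.card_insert_of_notMem (by simp [Ne.symm hmj]),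
        Finset.card_singleton] at this
      omega
    have hwe : w = Function.update y j (!(y j)) := by
      funext i
      by_cases hij : i = j
      · subst hij; rw [Function.update_self]; exact bool_flip hj
      · rw [Function.update_of_ne hij, hwj i hij]
    exact Finset.mem_image.2 ⟨j, by simp [hD, hxj], hwe.symm⟩
  · -- distance ≥ 3 : empty
    refine ⟨∅, by simp, fun w hwy hxw => ?_⟩
    have := hammingDist_triangle x w y
    omega

end Aux


section Aux2
variable {n : ℕ} {S : Set (Fin n → Bool)} [Fintype ↥S]
  [DecidableRel ((Qcube n).induce S).Adj]

/-- Safe-step lemma: if the robber has degree ≥ 2k+1 and no cop stands on it,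
then it has a safe move (to itself or a neighbor) at Hamming distance ≥ 2 from
every cop. -/
lemma safe_step (k : ℕ) (c : Fin k → ↥S) (r : ↥S)
    (hdeg : 2 * k + 1 ≤ ((Qcube n).induce S).degree r)
    (hne : ∀ i, (c i : Fin n → Bool) ≠ (r : Fin n → Bool)) :
    ∃ v : ↥S, (v = r ∨ ((Qcube n).induce S).Adj r v) ∧
      ∀ i, 2 ≤ hammingDist ((c i) : Fin n → Bool) (v : Fin n → Bool) := by
  classical
  set N : Finset ↥S := insert r (((Qcube n).induce S).neighborFinset r) with hN
  have hrN : r ∉ ((Qcube n).induce S).neighborFinset r := by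
    rw [SimpleGraph.mem_neighborFinset]; exact ((Qcube n).induce S).irrefl
  have hNcard : N.card = ((Qcube n).induce S).degree r + 1 := by
    rw [hN, Finset.card_insert_of_notMem hrN]; rfl
  -- distance from r to anything in N is ≤ 1
  have hNdist : ∀ v ∈ N, hammingDist (v : Fin n → Bool) (r : Fin n → Bool) ≤ 1 := by
    intro v hv
    rcases Finset.mem_insert.1 hv with rfl | hv
    · simp [hammingDist_self]
    · have h1 : ((Qcube n).induce S).Adj r v := (SimpleGraph.mem_neighborFinset _ _ _).1 hv
      have : hammingDist (r : Fin n → Bool) (v : Fin n → Bool) = 1 := h1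
      rw [hammingDist_comm] at this
      omega
  set B : Finset ↥S :=
    N.filter (fun v => ∃ i, hammingDist ((c i) : Fin n → Bool) (v : Fin n → Bool) ≤ 1) with hB
  have hBcard : B.card ≤ 2 * k := by
    have hsub : B ⊆ Finset.univ.biUnion (fun i : Fin k =>
        N.filter (fun v => hammingDist (c i).val v.val ≤ 1)) := by
      intro v hv
      obtain ⟨hvN, i, hi⟩ := Finset.mem_filter.1 hv
      exact Finset.mem_biUnion.2 ⟨i, Finset.mem_univ i, Finset.mem_filter.2 ⟨hvN, hi⟩⟩
    refine (Finset.card_le_card hsub).trans ((Finset.card_biUnion_le).trans ?_)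
    have hone : ∀ i : Fin k,
        (N.filter (fun v => hammingDist (c i).val v.val ≤ 1)).card ≤ 2 := by
      intro i
      obtain ⟨P, hP2, hPmem⟩ := pair_lemma (c i : Fin n → Bool) (r : Fin n → Bool) (hne i)
      refine le_trans ?_ hP2
      refine Finset.card_le_card_of_injOn (fun v : ↥S => (v : Fin n → Bool)) ?_
        (Subtype.val_injective.injOn)
      intro v hv
      obtain ⟨hvN, hvd⟩ := Finset.mem_filter.1 hv
      exact hPmem _ (hNdist v hvN) hvd
    calc (Finset.univ : Finset (Fin k)).sum (fun i =>
          (N.filter (fun v => hammingDist (c i).val v.val ≤ 1)).card)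
        ≤ (Finset.univ : Finset (Fin k)).sum (fun _ => 2) := Finset.sum_le_sum (fun i _ => hone i)
      _ = 2 * k := by simp [Finset.sum_const, Finset.card_univ, mul_comm]
  have hnsub : ¬ N ⊆ B := by
    intro hsub
    have hle := Finset.card_le_card hsub
    omega
  obtain ⟨v, hvN, hvB⟩ := Finset.not_subset.1 hnsub
  refine ⟨v, ?_, ?_⟩
  · rcases Finset.mem_insert.1 hvN with rfl | hv'
    · exact Or.inl rfl
    · exact Or.inr ((SimpleGraph.mem_neighborFinset _ _ _).1 hv')
  · intro i
    by_contra hlt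
    exact hvB (Finset.mem_filter.2 ⟨hvN, ⟨i, by omega⟩⟩)

/-- If the minimum degree exceeds `2k`, then `k` cops do not win on the
induced subgraph of the hypercube. -/
lemma robber_escapes (k : ℕ) [Nonempty ↥S]
    (hdeg : 2 * k + 1 ≤ ((Qcube n).induce S).minDegree) :
    ¬ CopsWin ((Qcube n).induce S) k := by
  classical
  rintro ⟨CS, hCS⟩
  have hdegv : ∀ r : ↥S, 2 * k + 1 ≤ ((Qcube n).induce S).degree r :=
    fun r => hdeg.trans (SimpleGraph.minDegree_le_degree _ r)
  have hcard : 2 * k + 1 < Fintype.card ↥S :=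
    lt_of_le_of_lt (hdegv (Classical.arbitrary ↥S))
      (SimpleGraph.degree_lt_card_verts _)
  -- initial safe vertex
  have hinit : ∀ c : Fin k → ↥S, ∃ v : ↥S, ∀ i, 2 ≤ hammingDist (c i).val v.val := by
    intro c
    have : ¬ (Finset.univ : Finset ↥S) ⊆ Finset.univ.image c := by
      intro hsub
      have h1 := Finset.card_le_card hsub
      have h2 := Finset.card_image_le (s := (Finset.univ : Finset (Fin k))) (f := c)
      simp only [Finset.card_univ, Fintype.card_fin] at h1 h2
      omega
    obtain ⟨r, _, hr⟩ := Finset.not_subset.1 this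
    have hner : ∀ i, (c i).val ≠ r.val := by
      intro i hi
      exact hr (Finset.mem_image.2 ⟨i, Finset.mem_univ i, Subtype.val_injective hi⟩)
    obtain ⟨v, _, hv⟩ := safe_step k c r (hdegv r) hner
    exact ⟨v, hv⟩
  have hmove : ∀ (c : Fin k → ↥S) (r : ↥S), (∀ i, 1 ≤ hammingDist (c i).val r.val) →
      ∃ v : ↥S, (v = r ∨ ((Qcube n).induce S).Adj r v) ∧
        ∀ i, 2 ≤ hammingDist (c i).val v.val := by
    intro c r h1
    refine safe_step k c r (hdegv r) (fun i hi => ?_)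
    have := h1 i
    rw [hi, hammingDist_self] at this
    omega
  -- the robber strategy
  let R : RobberStrategy ((Qcube n).induce S) k :=
    { init := fun c => (hinit c).choose
      move := fun c r =>
        if h : ∃ v : ↥S, (v = r ∨ ((Qcube n).induce S).Adj r v) ∧
            ∀ i, 2 ≤ hammingDist (c i).val v.val then h.choose else r
      valid := by
        intro c r
        by_cases h : ∃ v : ↥S, (v = r ∨ ((Qcube n).induce S).Adj r v) ∧
            ∀ i, 2 ≤ hammingDist (c i).val v.val
        · simp only [dif_pos h]
          exact h.choose_spec.1
        · exact Or.inl (dif_neg h) }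
  -- invariant: after the robber's move, every cop is at Hamming distance ≥ 2
  have hInv : ∀ t, ∀ i, 2 ≤ hammingDist ((gamePlay CS R t).1 i).val (gamePlay CS R t).2.val := by
    intro t
    induction t with
    | zero => exact (hinit CS.init).choose_spec
    | succ t ih =>
      set p := gamePlay CS R t with hp
      set c' := CS.move p.1 p.2 with hc'
      have h1 : ∀ i, 1 ≤ hammingDist (c' i).val p.2.val := by
        intro i
        rcases CS.valid p.1 p.2 i with h | h
        · rw [hc', h]; exact le_trans (by omega) (ih i)
        · have hadj : hammingDist (p.1 i).val (c' i).val = 1 := h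
          have htri := hammingDist_triangle (p.1 i).val (c' i).val p.2.val
          have := ih i
          omega
      have hex := hmove c' p.2 h1
      have : gamePlay CS R (t + 1) = (c', R.move c' p.2) := rfl
      rw [this]
      show ∀ i, 2 ≤ hammingDist (c' i).val (R.move c' p.2).val
      have : R.move c' p.2 = hex.choose := dif_pos hex
      rw [this]
      exact hex.choose_spec.2
  -- derive a contradiction from the capture
  obtain ⟨t, i, hcap⟩ := hCS R
  rcases hcap with h | h
  · have := hInv t i
    rw [h, hammingDist_self] at this
    omega
  · rcases CS.valid (gamePlay CS R t).1 (gamePlay CS R t).2 i with hv | hv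
    · rw [hv] at h
      have := hInv t i
      rw [h, hammingDist_self] at this
      omega
    · rw [h] at hv
      have h1 : hammingDist ((gamePlay CS R t).1 i).val (gamePlay CS R t).2.val = 1 := hv
      have h2 := hInv t i
      omega

/-- With one cop per vertex, the cops win. -/
lemma cops_win_card : CopsWin ((Qcube n).induce S) (Fintype.card ↥S) := by
  classical
  refine ⟨⟨fun i => (Fintype.equivFin ↥S).symm i, fun c _ => c, fun c r i => Or.inl rfl⟩, ?_⟩
  intro R
  refine ⟨0, Fintype.equivFin ↥S (R.init fun i => (Fintype.equivFin ↥S).symm i), Or.inl ?_⟩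
  exact Equiv.symm_apply_apply _ _

end Aux2

/-- If `G` is a partial cube with minimum degree `δ`, then `c(G) ≥ ⌈δ/2⌉`. -/
theorem stmt3 (n : ℕ) (S : Set (Fin n → Bool)) [Fintype ↥S]
    [DecidableRel ((Qcube n).induce S).Adj]
    (hconn : ((Qcube n).induce S).Connected)
    (hiso : ∀ u v : ↥S, ((Qcube n).induce S).dist u v = (Qcube n).dist u.val v.val) :
    (((Qcube n).induce S).minDegree + 1) / 2 ≤ copNumber ((Qcube n).induce S) := by
  haveI : Nonempty ↥S := hconn.nonempty
  have hne : {k | CopsWin ((Qcube n).induce S) k}.Nonempty :=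
    ⟨Fintype.card ↥S, cops_win_card⟩
  have hmem : CopsWin ((Qcube n).induce S) (copNumber ((Qcube n).induce S)) :=
    Nat.sInf_mem hne
  by_contra hlt
  push_neg at hlt
  have h2 : 2 * copNumber ((Qcube n).induce S) + 1 ≤ ((Qcube n).induce S).minDegree := by
    omega
  exact robber_escapes _ h2 hmem
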